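/- Let F be a free group on a finite set and N ≥ 1. For every group homomorphism f from the free abelian group ℤ^N to F there exist an element s ∈ F and integers c₁, …, c_N such that f(x₁, …, x_N) = s^{c₁x₁ + ⋯ + c_N x_N} for all (x₁, …, x_N) ∈ ℤ^N. In particular, the image of f is a cyclic subgroup of F. -/

import Mathlib

open Subgroup

/-- A commutative free group over `X` forces `X` to be a subsingleton. -/
lemma subsingleton_of_comm_freeGroup {X : Type*}
    (h : ∀ a b : FreeGroup X, a * b = b * a) : Subsingleton X := by
  classical
  constructor
  intro x y
  by_contra hxy
  let k : X → Equiv.Perm (Fin 3) := fun z =>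
    if z = x then Equiv.swap 0 1 else if z = y then Equiv.swap 1 2 else 1
  have hcomm := congrArg (FreeGroup.lift k) (h (FreeGroup.of x) (FreeGroup.of y))
  simp only [map_mul, FreeGroup.lift_apply_of] at hcomm
  have hkx : k x = Equiv.swap 0 1 := by simp [k]
  have hky : k y = Equiv.swap 1 2 := by simp [k, hxy, Ne.symm hxy]
  rw [hkx, hky] at hcomm
  exact absurd hcomm (by decide)

/-- A free group over a subsingleton type is generated by one element. -/
lemma freeGroup_cyclic_of_subsingleton {X : Type*} [Subsingleton X] :
    ∃ g : FreeGroup X, ∀ z : FreeGroup X, z ∈ zpowers g := by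
  classical
  refine ⟨if h : Nonempty X then FreeGroup.of h.some else 1, fun z => ?_⟩
  induction z using FreeGroup.induction_on with
  | C1 => exact one_mem _
  | of x =>
      have hne : Nonempty X := ⟨x⟩
      rw [dif_pos hne, Subsingleton.elim hne.some x]
      exact mem_zpowers _
  | inv_of x ih => exact (Subgroup.zpowers _).inv_mem ih
  | mul a b ha hb => exact mul_mem ha hb

theorem hom_from_zn_to_freeGroup (α : Type*) [Finite α] (N : ℕ) (hN : 1 ≤ N)
    (f : Multiplicative (Fin N → ℤ) →* FreeGroup α) :
    ∃ (s : FreeGroup α) (c : Fin N → ℤ),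
      (∀ x : Fin N → ℤ, f (Multiplicative.ofAdd x) = s ^ (∑ i, c i * x i)) ∧
      ∃ g : FreeGroup α, f.range = Subgroup.zpowers g := by
  classical
  set H := f.range with hH
  haveI : IsFreeGroup H := inferInstance
  have hHcomm : ∀ a b : H, a * b = b * a := by
    rintro ⟨a, u, rfl⟩ ⟨b, v, rfl⟩
    have : f u * f v = f v * f u := by rw [← map_mul, ← map_mul, mul_comm]
    exact Subtype.ext this
  let e := IsFreeGroup.mulEquiv H
  haveI : Subsingleton (IsFreeGroup.Generators H) := by
    apply subsingleton_of_comm_freeGroup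
    intro a b
    apply e.injective
    simp only [map_mul]
    exact hHcomm _ _
  obtain ⟨g₀, hg₀⟩ := freeGroup_cyclic_of_subsingleton (X := IsFreeGroup.Generators H)
  have hHpow : ∀ h : H, h ∈ zpowers (e g₀) := by
    intro h
    obtain ⟨n, hn⟩ := hg₀ (e.symm h)
    refine ⟨n, ?_⟩
    show e g₀ ^ n = h
    have hn' : g₀ ^ n = e.symm h := hn
    rw [← map_zpow, hn', e.apply_symm_apply]
  set s : FreeGroup α := ((e g₀ : H) : FreeGroup α) with hs
  have hrange : f.range = Subgroup.zpowers s := by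
    ext y
    constructor
    · intro hy
      obtain ⟨n, hn⟩ := hHpow ⟨y, hy⟩
      have hn' : (e g₀ : H) ^ n = ⟨y, hy⟩ := hn
      refine ⟨n, ?_⟩
      show s ^ n = y
      rw [hs, ← SubgroupClass.coe_zpow, hn']
    · rintro ⟨n, rfl⟩
      show (s : FreeGroup α) ^ n ∈ f.range
      exact zpow_mem (e g₀).2 n
  have hmem : ∀ i : Fin N, f (Multiplicative.ofAdd (Pi.single i 1)) ∈ zpowers s := by
    intro i
    rw [← hrange]
    exact ⟨Multiplicative.ofAdd (Pi.single i 1), rfl⟩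
  choose c hc0 using fun i => (hmem i)
  have hc : ∀ i, s ^ c i = f (Multiplicative.ofAdd (Pi.single i 1)) := fun i => hc0 i
  refine ⟨s, c, ?_, s, hrange⟩
  intro x
  -- key : list product of powers of s is a power of s
  have key : ∀ (m : Fin N → ℤ), (List.ofFn (fun i => s ^ m i)).prod = s ^ (∑ i, m i) := by
    intro m
    have h1 : s ^ (∑ i, m i) = zpowersHom (FreeGroup α) s (Multiplicative.ofAdd (∑ i, m i)) := rfl
    rw [h1, ofAdd_sum, ← Fin.prod_ofFn (fun i => Multiplicative.ofAdd (m i)),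
      MonoidHom.map_list_prod, List.map_ofFn]
    rfl
  have hx : Multiplicative.ofAdd x
      = (List.ofFn (fun i => Multiplicative.ofAdd (Pi.single i (x i)))).prod := by
    rw [Fin.prod_ofFn, ← ofAdd_sum]
    congr 1
    exact (Finset.univ_sum_single x).symm
  rw [hx, MonoidHom.map_list_prod, List.map_ofFn]
  have hterm : (⇑f ∘ fun i => Multiplicative.ofAdd (Pi.single i (x i)))
      = fun i => s ^ (c i * x i) := by
    funext i
    show f (Multiplicative.ofAdd (Pi.single i (x i))) = s ^ (c i * x i)
    have h1 : Pi.single i (x i) = x i • (Pi.single i 1 : Fin N → ℤ) := by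
      rw [← Pi.single_smul, smul_eq_mul, mul_one]
    rw [h1, ofAdd_zsmul, map_zpow, ← hc i, ← zpow_mul]
  rw [hterm]
  exact key _
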